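/- For each integer p ≥ 3, let W_p ⊆ [0,1]² be the union of the segments conv((0,1),(0,0)), conv((0,0),(2/p,1/p)), conv((2/p,1/p),(1/(p−1),0)), and conv((1/(p−1),0),(1,0)), and let L = ({0} × [0,1]) ∪ ([0,1] × {0}). Then for every integer p ≥ 3 the map ρ(x,y) = (max(x−y,0), max(y−x,0)) restricted to W_p is a Z-homeomorphism of W_p onto L. -/

import Mathlib

open Set MeasureTheory

/-- The unit cube `[0,1]^n` in `ℝ^n`. -/
def cubeSet (n : ℕ) : Set (Fin n → ℝ) := Set.Icc 0 1

/-- A point all of whose coordinates are rational. -/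
def IsRationalPoint {n : ℕ} (v : Fin n → ℝ) : Prop := ∀ i, ∃ q : ℚ, v i = (q : ℝ)

/-- A rational polyhedron: a finite union of convex hulls of finite sets of rational points. -/
def IsRationalPolyhedron {n : ℕ} (P : Set (Fin n → ℝ)) : Prop :=
  ∃ S : Finset (Finset (Fin n → ℝ)),
    (∀ F ∈ S, ∀ v ∈ F, IsRationalPoint v) ∧
    P = ⋃ F ∈ S, convexHull ℝ (F : Set (Fin n → ℝ))

/-- An affine map `x ↦ Mx + b` with integer matrix `M` and integer vector `b`. -/
def IsIntAffine {n m : ℕ} (g : (Fin n → ℝ) → (Fin m → ℝ)) : Prop :=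
  ∃ (M : Fin m → Fin n → ℤ) (b : Fin m → ℤ),
    ∀ x i, g x i = (∑ j, (M i j : ℝ) * x j) + (b i : ℝ)

/-- A Z-map on `P`: continuous on `P`, with finitely many integer affine pieces. -/
def IsZMapOn {n m : ℕ} (P : Set (Fin n → ℝ)) (f : (Fin n → ℝ) → (Fin m → ℝ)) : Prop :=
  ContinuousOn f P ∧
  ∃ (k : ℕ) (g : Fin k → (Fin n → ℝ) → (Fin m → ℝ)),
    (∀ i, IsIntAffine (g i)) ∧ ∀ x ∈ P, ∃ i, f x = g i x

/-- `f` restricted to `P` is a Z-homeomorphism of `P` onto `Q`. -/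
def IsZHomeoOnto {n m : ℕ} (P : Set (Fin n → ℝ)) (Q : Set (Fin m → ℝ))
    (f : (Fin n → ℝ) → (Fin m → ℝ)) : Prop :=
  IsZMapOn P f ∧ f '' P = Q ∧ Set.InjOn f P ∧
  ∃ g : (Fin m → ℝ) → (Fin n → ℝ),
    IsZMapOn Q g ∧ (∀ x ∈ P, g (f x) = x) ∧ (∀ y ∈ Q, f (g y) = y)

/-- A Z-retraction of the cube `[0,1]^n`. -/
def IsZRetraction {n : ℕ} (σ : (Fin n → ℝ) → (Fin n → ℝ)) : Prop :=
  IsZMapOn (cubeSet n) σ ∧ Set.MapsTo σ (cubeSet n) (cubeSet n) ∧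
  ∀ x ∈ cubeSet n, σ (σ x) = σ x

/-- The range `R_σ = σ([0,1]^n)` of a Z-retraction. -/
def zRange {n : ℕ} (σ : (Fin n → ℝ) → (Fin n → ℝ)) : Set (Fin n → ℝ) := σ '' cubeSet n

/-- A Z-homeomorphism domain for `σ`: a rational polyhedron `Q ⊆ [0,1]^n` such that
`σ` restricted to `Q` is a Z-homeomorphism of `Q` onto `R_σ`. -/
def IsZHomeoDomain {n : ℕ} (σ : (Fin n → ℝ) → (Fin n → ℝ)) (Q : Set (Fin n → ℝ)) : Prop :=
  IsRationalPolyhedron Q ∧ Q ⊆ cubeSet n ∧ IsZHomeoOnto Q (zRange σ) σ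

/-- A (Kuratowski) closed domain: `D` equals the closure of its interior. -/
def IsClosedDomain {n : ℕ} (D : Set (Fin n → ℝ)) : Prop :=
  closure (interior D) = D

/-- A scalar integer affine map. -/
def IsIntAffine1 {n : ℕ} (g : (Fin n → ℝ) → ℝ) : Prop :=
  ∃ (m : Fin n → ℤ) (b : ℤ), ∀ x, g x = (∑ j, (m j : ℝ) * x j) + (b : ℝ)

/-- A scalar Z-map on `P`. -/
def IsZMapOn1 {n : ℕ} (P : Set (Fin n → ℝ)) (f : (Fin n → ℝ) → ℝ) : Prop :=
  ContinuousOn f P ∧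
  ∃ (k : ℕ) (g : Fin k → (Fin n → ℝ) → ℝ),
    (∀ i, IsIntAffine1 (g i)) ∧ ∀ x ∈ P, ∃ i, f x = g i x

/-- The free MV-algebra `McN([0,1]^n)`, viewed as a set of functions on the cube. -/
def McN (n : ℕ) : Set (↥(cubeSet n) → ℝ) :=
  { f | (∀ x, f x ∈ Set.Icc (0:ℝ) 1) ∧
    ∃ g : (Fin n → ℝ) → ℝ, IsZMapOn1 (cubeSet n) g ∧ ∀ x : ↥(cubeSet n), f x = g x.1 }

/-- Pointwise MV-sum `f ⊕ g = min(f + g, 1)`. -/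
def mvAdd {X : Type*} (f g : X → ℝ) : X → ℝ := fun x => min (f x + g x) 1

/-- Pointwise MV-negation `¬f = 1 - f`. -/
def mvNeg {X : Type*} (f : X → ℝ) : X → ℝ := fun x => 1 - f x

/-- The retract `A_σ = {g ∘ σ : g ∈ McN([0,1]^n)}` associated with a Z-retraction `σ`. -/
def retAlg {n : ℕ} (σ : (Fin n → ℝ) → (Fin n → ℝ)) : Set (↥(cubeSet n) → ℝ) :=
  { f | ∃ g ∈ McN n, ∀ (x : ↥(cubeSet n)) (h : σ x.1 ∈ cubeSet n), f x = g ⟨σ x.1, h⟩ }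

/-- `ε` is a retraction of `McN([0,1]^n)` onto `A`. -/
def IsMcNRetraction {n : ℕ} (ε : ↥(McN n) → ↥(McN n)) (A : Set (↥(cubeSet n) → ℝ)) : Prop :=
  (∀ (f g : ↥(McN n)) (h : mvAdd f.1 g.1 ∈ McN n),
      (ε ⟨mvAdd f.1 g.1, h⟩).1 = mvAdd (ε f).1 (ε g).1) ∧
  (∀ (f : ↥(McN n)) (h : mvNeg f.1 ∈ McN n),
      (ε ⟨mvNeg f.1, h⟩).1 = mvNeg (ε f).1) ∧
  (∀ f, ε (ε f) = ε f) ∧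
  Subtype.val '' Set.range ε = A

/-- An MV-isomorphism between two sets of `[0,1]`-valued functions. -/
def IsMVIsoFun {X Y : Type*} (A : Set (X → ℝ)) (B : Set (Y → ℝ)) (h : ↥A → ↥B) : Prop :=
  Function.Bijective h ∧
  (∀ (f g : ↥A) (hm : mvAdd f.1 g.1 ∈ A),
      (h ⟨mvAdd f.1 g.1, hm⟩).1 = mvAdd (h f).1 (h g).1) ∧
  (∀ (f : ↥A) (hm : mvNeg f.1 ∈ A),
      (h ⟨mvNeg f.1, hm⟩).1 = mvNeg (h f).1)

/-- `ρ(x,y) = (max(x-y,0), max(y-x,0))`. -/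
def rho11 : (Fin 2 → ℝ) → (Fin 2 → ℝ) := fun v => ![max (v 0 - v 1) 0, max (v 1 - v 0) 0]

/-- `L = ({0} × [0,1]) ∪ ([0,1] × {0})`. -/
def Lset : Set (Fin 2 → ℝ) :=
  {v | (v 0 = 0 ∧ 0 ≤ v 1 ∧ v 1 ≤ 1) ∨ (v 1 = 0 ∧ 0 ≤ v 0 ∧ v 0 ≤ 1)}

/-- The broken line `W_p`. -/
def Wline (p : ℕ) : Set (Fin 2 → ℝ) :=
  segment ℝ ![0, 1] ![0, 0] ∪
  segment ℝ ![0, 0] ![2 / (p : ℝ), 1 / (p : ℝ)] ∪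
  segment ℝ ![2 / (p : ℝ), 1 / (p : ℝ)] ![1 / ((p : ℝ) - 1), 0] ∪
  segment ℝ ![1 / ((p : ℝ) - 1), 0] ![1, 0]

/-! ### Auxiliary material for stmt12 -/

/-- The explicit inverse of `rho11` on `L`, written with min/max so it is
globally continuous. -/
def gmap (p : ℕ) : (Fin 2 → ℝ) → (Fin 2 → ℝ) := fun w =>
  ![min (2 * w 0) (max (1 - ((p : ℝ) - 2) * w 0) (w 0)),
    max (min (w 0) (1 - ((p : ℝ) - 1) * w 0)) 0 + w 1]

lemma pair_eq {x : Fin 2 → ℝ} {A B : ℝ} (hA : x 0 = A) (hB : x 1 = B) :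
    x = ![A, B] := by
  funext j; fin_cases j <;> simpa

lemma intAffine_pair (f0 f1 : (Fin 2 → ℝ) → ℝ)
    (h0 : ∃ a b c : ℤ, ∀ w : Fin 2 → ℝ, f0 w = (a : ℝ) * w 0 + (b : ℝ) * w 1 + (c : ℝ))
    (h1 : ∃ a b c : ℤ, ∀ w : Fin 2 → ℝ, f1 w = (a : ℝ) * w 0 + (b : ℝ) * w 1 + (c : ℝ)) :
    IsIntAffine (fun w => ![f0 w, f1 w]) := by
  obtain ⟨a0, b0, c0, H0⟩ := h0
  obtain ⟨a1, b1, c1, H1⟩ := h1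
  refine ⟨![![a0, b0], ![a1, b1]], ![c0, c1], fun x i => ?_⟩
  fin_cases i <;> simp [Fin.sum_univ_two, H0, H1]

lemma rho_eval_ge (w : Fin 2 → ℝ) (h : w 1 ≤ w 0) : rho11 w = ![w 0 - w 1, 0] := by
  funext i
  fin_cases i
  · exact max_eq_left (by linarith)
  · exact max_eq_right (by linarith)

lemma rho_eval_le (w : Fin 2 → ℝ) (h : w 0 ≤ w 1) : rho11 w = ![0, w 1 - w 0] := by
  funext i
  fin_cases i
  · exact max_eq_right (by linarith)
  · exact max_eq_left (by linarith)

lemma rho_zmap (S : Set (Fin 2 → ℝ)) : IsZMapOn S rho11 := by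
  constructor
  · apply Continuous.continuousOn
    apply continuous_pi
    intro i
    fin_cases i
    · exact ((continuous_apply 0).sub (continuous_apply 1)).max continuous_const
    · exact ((continuous_apply 1).sub (continuous_apply 0)).max continuous_const
  · refine ⟨2, ![fun w => ![w 0 - w 1, 0], fun w => ![0, w 1 - w 0]], ?_, ?_⟩
    · intro i
      fin_cases i
      · exact intAffine_pair _ _ ⟨1, -1, 0, by intro w; push_cast; ring⟩
          ⟨0, 0, 0, by intro w; push_cast; ring⟩
      · exact intAffine_pair _ _ ⟨0, 0, 0, by intro w; push_cast; ring⟩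
          ⟨-1, 1, 0, by intro w; push_cast; ring⟩
    · intro x _
      rcases le_total (x 1) (x 0) with h | h
      · exact ⟨0, by rw [rho_eval_ge x h]; simp⟩
      · exact ⟨1, by rw [rho_eval_le x h]; simp⟩

lemma gmap_apply0 (p : ℕ) (x : Fin 2 → ℝ) :
    gmap p x 0 = min (2 * x 0) (max (1 - ((p : ℝ) - 2) * x 0) (x 0)) := by
  simp [gmap]

lemma gmap_apply1 (p : ℕ) (x : Fin 2 → ℝ) :
    gmap p x 1 = max (min (x 0) (1 - ((p : ℝ) - 1) * x 0)) 0 + x 1 := by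
  simp [gmap]

lemma g_zmap (p : ℕ) (S : Set (Fin 2 → ℝ)) : IsZMapOn S (gmap p) := by
  constructor
  · apply Continuous.continuousOn
    apply continuous_pi
    intro i
    fin_cases i
    · exact (Continuous.min (continuous_const.mul (continuous_apply 0))
        ((continuous_const.sub (continuous_const.mul (continuous_apply 0))).max
          (continuous_apply 0)))
    · exact (((continuous_apply 0).min
        (continuous_const.sub (continuous_const.mul (continuous_apply 0)))).max
          continuous_const).add (continuous_apply 1)
  · set P : ℝ := (p : ℝ) with hPdef
    refine ⟨9,
      ![fun w => ![2 * w 0, w 0 + w 1],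
        fun w => ![2 * w 0, 1 - (P - 1) * w 0 + w 1],
        fun w => ![2 * w 0, w 1],
        fun w => ![1 - (P - 2) * w 0, w 0 + w 1],
        fun w => ![1 - (P - 2) * w 0, 1 - (P - 1) * w 0 + w 1],
        fun w => ![1 - (P - 2) * w 0, w 1],
        fun w => ![w 0, w 0 + w 1],
        fun w => ![w 0, 1 - (P - 1) * w 0 + w 1],
        fun w => ![w 0, w 1]], ?_, ?_⟩
    · have A1 : ∃ a b c : ℤ, ∀ w : Fin 2 → ℝ,
          2 * w 0 = (a : ℝ) * w 0 + (b : ℝ) * w 1 + (c : ℝ) :=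
        ⟨2, 0, 0, by intro w; push_cast; ring⟩
      have A2 : ∃ a b c : ℤ, ∀ w : Fin 2 → ℝ,
          1 - (P - 2) * w 0 = (a : ℝ) * w 0 + (b : ℝ) * w 1 + (c : ℝ) :=
        ⟨-((p : ℤ) - 2), 0, 1, by intro w; rw [hPdef]; push_cast; ring⟩
      have A3 : ∃ a b c : ℤ, ∀ w : Fin 2 → ℝ,
          w 0 = (a : ℝ) * w 0 + (b : ℝ) * w 1 + (c : ℝ) :=
        ⟨1, 0, 0, by intro w; push_cast; ring⟩
      have B1 : ∃ a b c : ℤ, ∀ w : Fin 2 → ℝ,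
          w 0 + w 1 = (a : ℝ) * w 0 + (b : ℝ) * w 1 + (c : ℝ) :=
        ⟨1, 1, 0, by intro w; push_cast; ring⟩
      have B2 : ∃ a b c : ℤ, ∀ w : Fin 2 → ℝ,
          1 - (P - 1) * w 0 + w 1 = (a : ℝ) * w 0 + (b : ℝ) * w 1 + (c : ℝ) :=
        ⟨-((p : ℤ) - 1), 1, 1, by intro w; rw [hPdef]; push_cast; ring⟩
      have B3 : ∃ a b c : ℤ, ∀ w : Fin 2 → ℝ,
          w 1 = (a : ℝ) * w 0 + (b : ℝ) * w 1 + (c : ℝ) :=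
        ⟨0, 1, 0, by intro w; push_cast; ring⟩
      intro i
      fin_cases i
      · exact intAffine_pair _ _ A1 B1
      · exact intAffine_pair _ _ A1 B2
      · exact intAffine_pair _ _ A1 B3
      · exact intAffine_pair _ _ A2 B1
      · exact intAffine_pair _ _ A2 B2
      · exact intAffine_pair _ _ A2 B3
      · exact intAffine_pair _ _ A3 B1
      · exact intAffine_pair _ _ A3 B2
      · exact intAffine_pair _ _ A3 B3
    · intro x _
      have hA : gmap p x 0 = 2 * x 0 ∨ gmap p x 0 = 1 - (P - 2) * x 0 ∨
          gmap p x 0 = x 0 := by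
        rw [gmap_apply0]
        rcases le_total (2 * x 0) (max (1 - (P - 2) * x 0) (x 0)) with h | h
        · exact Or.inl (min_eq_left h)
        · rw [min_eq_right h]
          rcases le_total (x 0) (1 - (P - 2) * x 0) with h' | h'
          · exact Or.inr (Or.inl (max_eq_left h'))
          · exact Or.inr (Or.inr (max_eq_right h'))
      have hB : gmap p x 1 = x 0 + x 1 ∨ gmap p x 1 = 1 - (P - 1) * x 0 + x 1 ∨
          gmap p x 1 = x 1 := by
        rw [gmap_apply1]
        rcases le_total (x 0) (1 - (P - 1) * x 0) with h | h
        · rw [min_eq_left h]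
          rcases le_total 0 (x 0) with h' | h'
          · rw [max_eq_left h']; exact Or.inl rfl
          · rw [max_eq_right h', zero_add]; exact Or.inr (Or.inr rfl)
        · rw [min_eq_right h]
          rcases le_total 0 (1 - (P - 1) * x 0) with h' | h'
          · rw [max_eq_left h']; exact Or.inr (Or.inl rfl)
          · rw [max_eq_right h', zero_add]; exact Or.inr (Or.inr rfl)
      rcases hA with hA | hA | hA <;> rcases hB with hB | hB | hB
      exacts [⟨0, pair_eq hA hB⟩, ⟨1, pair_eq hA hB⟩, ⟨2, pair_eq hA hB⟩,
        ⟨3, pair_eq hA hB⟩, ⟨4, pair_eq hA hB⟩, ⟨5, pair_eq hA hB⟩,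
        ⟨6, pair_eq hA hB⟩, ⟨7, pair_eq hA hB⟩, ⟨8, pair_eq hA hB⟩]
lemma vec2_eq {a b c d : ℝ} (h1 : a = c) (h2 : b = d) :
    (![a, b] : Fin 2 → ℝ) = ![c, d] := by rw [h1, h2]

lemma g_eval0' (p : ℕ) (v : ℝ) : gmap p ![0, v] = ![0, v] := by
  refine pair_eq ?_ ?_
  · rw [gmap_apply0]
    simp only [Matrix.cons_val_zero]
    norm_num [min_def, max_def]
  · rw [gmap_apply1]
    simp only [Matrix.cons_val_zero, Matrix.cons_val_one, Matrix.head_cons]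
    norm_num [min_def, max_def]

lemma g_eval1' (p : ℕ) (u : ℝ) (h0 : 0 ≤ u) (hu : (p : ℝ) * u ≤ 1) :
    gmap p ![u, 0] = ![2 * u, u] := by
  refine pair_eq ?_ ?_
  · rw [gmap_apply0]
    simp only [Matrix.cons_val_zero]
    rw [max_eq_left (by nlinarith), min_eq_left (by nlinarith)]
  · rw [gmap_apply1]
    simp only [Matrix.cons_val_zero, Matrix.cons_val_one, Matrix.head_cons]
    rw [min_eq_left (by nlinarith), max_eq_left h0, add_zero]

lemma g_eval2' (p : ℕ) (u : ℝ) (hl : 1 ≤ (p : ℝ) * u) (hr : ((p : ℝ) - 1) * u ≤ 1) :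
    gmap p ![u, 0] = ![1 - ((p : ℝ) - 2) * u, 1 - ((p : ℝ) - 1) * u] := by
  refine pair_eq ?_ ?_
  · rw [gmap_apply0]
    simp only [Matrix.cons_val_zero]
    rw [max_eq_left (by nlinarith), min_eq_right (by nlinarith)]
  · rw [gmap_apply1]
    simp only [Matrix.cons_val_zero, Matrix.cons_val_one, Matrix.head_cons]
    rw [min_eq_right (by nlinarith), max_eq_left (by nlinarith), add_zero]

lemma g_eval3' (p : ℕ) (u : ℝ) (h0 : 0 ≤ u) (hl : 1 ≤ ((p : ℝ) - 1) * u) :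
    gmap p ![u, 0] = ![u, 0] := by
  refine pair_eq ?_ ?_
  · rw [gmap_apply0]
    simp only [Matrix.cons_val_zero]
    rw [max_eq_right (by nlinarith), min_eq_right (by nlinarith)]
  · rw [gmap_apply1]
    simp only [Matrix.cons_val_zero, Matrix.cons_val_one, Matrix.head_cons]
    rw [min_eq_right (by nlinarith), max_eq_right (by nlinarith), add_zero]
lemma keyW (p : ℕ) (hp : 3 ≤ p) :
    ∀ w ∈ Wline p, rho11 w ∈ Lset ∧ gmap p (rho11 w) = w := by
  have hP : (3 : ℝ) ≤ (p : ℝ) := by exact_mod_cast hp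
  have hP0 : (0 : ℝ) < (p : ℝ) := by linarith
  have hP1 : (0 : ℝ) < (p : ℝ) - 1 := by linarith
  have hP2 : (0 : ℝ) < (p : ℝ) - 2 := by linarith
  set P : ℝ := (p : ℝ) with hPdef
  intro w hw
  rcases hw with ((h | h) | h) | h
  · -- segment (0,1)-(0,0)
    rw [segment_eq_image] at h
    obtain ⟨t, ⟨ht0, ht1⟩, hft⟩ := h
    have hw : w = ![0, 1 - t] := by
      rw [← hft]
      refine pair_eq ?_ ?_ <;>
        simp only [Pi.add_apply, Pi.smul_apply, smul_eq_mul,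
          Matrix.cons_val_zero, Matrix.cons_val_one, Matrix.head_cons] <;> ring
    rw [hw]
    have hr : rho11 ![(0 : ℝ), 1 - t] = ![0, 1 - t] := by
      rw [rho_eval_le _ (by simp only [Matrix.cons_val_zero, Matrix.cons_val_one, Matrix.head_cons]; linarith)]
      exact vec2_eq rfl (by simp only [Matrix.cons_val_zero, Matrix.cons_val_one, Matrix.head_cons]; ring)
    rw [hr]
    constructor
    · exact Or.inl ⟨rfl, (by norm_num; linarith), (by norm_num; linarith)⟩
    · exact g_eval0' p (1 - t)
  · -- segment (0,0)-(2/p,1/p)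
    rw [segment_eq_image] at h
    obtain ⟨t, ⟨ht0, ht1⟩, hft⟩ := h
    have hw : w = ![2 * (t / P), t / P] := by
      rw [← hft]
      refine pair_eq ?_ ?_ <;>
        simp only [Pi.add_apply, Pi.smul_apply, smul_eq_mul,
          Matrix.cons_val_zero, Matrix.cons_val_one, Matrix.head_cons] <;> ring
    have hu0 : 0 ≤ t / P := div_nonneg ht0 hP0.le
    have hu1 : P * (t / P) = t := by field_simp
    rw [hw]
    have hr : rho11 ![2 * (t / P), t / P] = ![t / P, 0] := by
      rw [rho_eval_ge _ (by simp only [Matrix.cons_val_zero, Matrix.cons_val_one, Matrix.head_cons]; linarith)]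
      exact vec2_eq (by simp only [Matrix.cons_val_zero, Matrix.cons_val_one, Matrix.head_cons]; ring) rfl
    rw [hr]
    constructor
    · refine Or.inr ⟨rfl, (by norm_num; exact hu0), ?_⟩
      norm_num
      nlinarith
    · rw [g_eval1' p (t / P) hu0 (by rw [hu1]; linarith)]
  · -- segment (2/p,1/p)-(1/(p-1),0)
    rw [segment_eq_image] at h
    obtain ⟨t, ⟨ht0, ht1⟩, hft⟩ := h
    set U : ℝ := (1 - t) * (1 / P) + t * (1 / (P - 1)) with hU
    have hw : w = ![(1 - t) * (2 / P) + t * (1 / (P - 1)), (1 - t) * (1 / P)] := by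
      rw [← hft]
      refine pair_eq ?_ ?_ <;>
        simp only [Pi.add_apply, Pi.smul_apply, smul_eq_mul,
          Matrix.cons_val_zero, Matrix.cons_val_one, Matrix.head_cons] <;> ring
    have e1 : 0 ≤ (1 - t) * (1 / P) := mul_nonneg (by linarith) (by positivity)
    have e2 : 0 ≤ t * (1 / (P - 1)) := mul_nonneg ht0 (by positivity)
    have ePU : P * U = 1 + t * (P / (P - 1) - 1) := by
      rw [hU]; field_simp; ring
    have ePU' : 1 ≤ P * U := by
      rw [ePU]
      have : 0 ≤ t * (P / (P - 1) - 1) := by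
        apply mul_nonneg ht0
        rw [sub_nonneg, le_div_iff₀ hP1]
        linarith
      linarith
    have eP1U : (P - 1) * U = 1 - (1 - t) * (1 / P) := by
      rw [hU]; field_simp; ring
    have eP1U' : (P - 1) * U ≤ 1 := by rw [eP1U]; linarith
    rw [hw]
    have hr : rho11 ![(1 - t) * (2 / P) + t * (1 / (P - 1)), (1 - t) * (1 / P)]
        = ![U, 0] := by
      rw [rho_eval_ge _ (by simp only [Matrix.cons_val_zero, Matrix.cons_val_one, Matrix.head_cons]; have h := add_nonneg e1 e2; ring_nf at h ⊢; linarith)]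
      refine vec2_eq ?_ rfl
      simp only [Matrix.cons_val_zero, Matrix.cons_val_one, Matrix.head_cons]
      rw [hU]; ring
    rw [hr]
    have hU0 : 0 ≤ U := by rw [hU]; linarith
    have hU1 : U ≤ 1 := by
      have l1 : (1 - t) * (1 / P) ≤ (1 - t) * 1 :=
        mul_le_mul_of_nonneg_left (by rw [div_le_one hP0]; linarith) (by linarith)
      have l2 : t * (1 / (P - 1)) ≤ t * 1 :=
        mul_le_mul_of_nonneg_left (by rw [div_le_one hP1]; linarith) ht0
      rw [hU]; linarith
    constructor
    · exact Or.inr ⟨rfl, (by norm_num; exact hU0), (by norm_num; exact hU1)⟩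
    · rw [g_eval2' p U ePU' eP1U']
      refine vec2_eq ?_ ?_
      · have : (P - 2) * U = P * U - 2 * U + U - U := by ring
        rw [hU]; field_simp; ring
      · rw [hU]; field_simp; ring
  · -- segment (1/(p-1),0)-(1,0)
    rw [segment_eq_image] at h
    obtain ⟨t, ⟨ht0, ht1⟩, hft⟩ := h
    set U : ℝ := (1 - t) * (1 / (P - 1)) + t with hU
    have hw : w = ![U, 0] := by
      rw [← hft]
      refine pair_eq ?_ ?_ <;>
        simp only [Pi.add_apply, Pi.smul_apply, smul_eq_mul,
          Matrix.cons_val_zero, Matrix.cons_val_one, Matrix.head_cons]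
      · rw [hU]; ring
      · ring
    have e1 : 0 ≤ (1 - t) * (1 / (P - 1)) := mul_nonneg (by linarith) (by positivity)
    have hU0 : 0 ≤ U := by rw [hU]; linarith
    have hU1 : U ≤ 1 := by
      have l1 : (1 - t) * (1 / (P - 1)) ≤ (1 - t) * 1 :=
        mul_le_mul_of_nonneg_left (by rw [div_le_one hP1]; linarith) (by linarith)
      rw [hU]; linarith
    have hlU : 1 ≤ (P - 1) * U := by
      have : (P - 1) * U = (1 - t) + t * (P - 1) := by
        rw [hU]; field_simp
      nlinarith
    rw [hw]
    have hr : rho11 ![U, 0] = ![U, 0] := by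
      rw [rho_eval_ge _ (by simp only [Matrix.cons_val_zero, Matrix.cons_val_one, Matrix.head_cons]; linarith)]
      exact vec2_eq (by simp only [Matrix.cons_val_zero, Matrix.cons_val_one, Matrix.head_cons]; ring) rfl
    rw [hr]
    exact ⟨Or.inr ⟨rfl, (by norm_num; exact hU0), (by norm_num; exact hU1)⟩,
      g_eval3' p U hU0 hlU⟩
lemma keyL (p : ℕ) (hp : 3 ≤ p) :
    ∀ y ∈ Lset, gmap p y ∈ Wline p ∧ rho11 (gmap p y) = y := by
  have hP : (3 : ℝ) ≤ (p : ℝ) := by exact_mod_cast hp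
  have hP0 : (0 : ℝ) < (p : ℝ) := by linarith
  have hP1 : (0 : ℝ) < (p : ℝ) - 1 := by linarith
  have hP2 : (0 : ℝ) < (p : ℝ) - 2 := by linarith
  set P : ℝ := (p : ℝ) with hPdef
  intro y hy
  rcases hy with ⟨h0, hv0, hv1⟩ | ⟨h1, hu0, hu1⟩
  · -- vertical part {0} × [0,1]
    have hy' : y = ![0, y 1] := pair_eq h0 rfl
    rw [hy']
    rw [g_eval0' p (y 1)]
    constructor
    · refine Or.inl (Or.inl (Or.inl ?_))
      rw [segment_eq_image]
      refine ⟨1 - y 1, ⟨by linarith, by linarith⟩, ?_⟩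
      refine pair_eq ?_ ?_ <;>
        simp only [Pi.add_apply, Pi.smul_apply, smul_eq_mul,
          Matrix.cons_val_zero, Matrix.cons_val_one, Matrix.head_cons] <;> ring
    · rw [rho_eval_le _ (by simp only [Matrix.cons_val_zero, Matrix.cons_val_one, Matrix.head_cons]; linarith)]
      exact vec2_eq rfl (by simp only [Matrix.cons_val_zero, Matrix.cons_val_one, Matrix.head_cons]; ring)
  · -- horizontal part [0,1] × {0}
    have hy' : y = ![y 0, 0] := pair_eq rfl h1
    rw [hy']
    rcases le_total (P * y 0) 1 with hc | hc
    · rw [g_eval1' p (y 0) hu0 hc]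
      constructor
      · refine Or.inl (Or.inl (Or.inr ?_))
        rw [segment_eq_image]
        refine ⟨P * y 0, ⟨mul_nonneg hP0.le hu0, hc⟩, ?_⟩
        refine pair_eq ?_ ?_ <;>
          simp only [Pi.add_apply, Pi.smul_apply, smul_eq_mul,
            Matrix.cons_val_zero, Matrix.cons_val_one, Matrix.head_cons] <;>
          field_simp <;> ring
      · rw [rho_eval_ge _ (by simp only [Matrix.cons_val_zero, Matrix.cons_val_one, Matrix.head_cons]; linarith)]
        exact vec2_eq (by simp only [Matrix.cons_val_zero, Matrix.cons_val_one, Matrix.head_cons]; ring) rfl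
    · rcases le_total ((P - 1) * y 0) 1 with hc2 | hc2
      · rw [g_eval2' p (y 0) hc hc2]
        constructor
        · refine Or.inl (Or.inr ?_)
          rw [segment_eq_image]
          refine ⟨(P - 1) * (P * y 0 - 1), ⟨mul_nonneg (by linarith) (by linarith), ?_⟩, ?_⟩
          · nlinarith [mul_nonneg (by linarith : (0:ℝ) ≤ 1 - (P - 1) * y 0) hP0.le]
          · refine pair_eq ?_ ?_ <;>
              simp only [Pi.add_apply, Pi.smul_apply, smul_eq_mul,
                Matrix.cons_val_zero, Matrix.cons_val_one, Matrix.head_cons] <;>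
              field_simp [show (p:ℝ) - 1 ≠ 0 from hP1.ne'] <;> ring
        · rw [rho_eval_ge _ (by simp only [Matrix.cons_val_zero, Matrix.cons_val_one, Matrix.head_cons]; nlinarith)]
          exact vec2_eq (by simp only [Matrix.cons_val_zero, Matrix.cons_val_one, Matrix.head_cons]; ring) rfl
      · rw [g_eval3' p (y 0) hu0 hc2]
        constructor
        · refine Or.inr ?_
          rw [segment_eq_image]
          refine ⟨((P - 1) * y 0 - 1) / (P - 2), ⟨div_nonneg (by linarith) (by linarith), ?_⟩, ?_⟩
          · rw [div_le_one hP2]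
            nlinarith [mul_nonneg (by linarith : (0:ℝ) ≤ 1 - y 0) (by linarith : (0:ℝ) ≤ P - 1)]
          · refine pair_eq ?_ ?_ <;>
              simp only [Pi.add_apply, Pi.smul_apply, smul_eq_mul,
                Matrix.cons_val_zero, Matrix.cons_val_one, Matrix.head_cons] <;>
              field_simp [show (p:ℝ) - 1 ≠ 0 from hP1.ne'] <;> ring
        · rw [rho_eval_ge _ (by simp only [Matrix.cons_val_zero, Matrix.cons_val_one, Matrix.head_cons]; linarith)]
          exact vec2_eq (by simp only [Matrix.cons_val_zero, Matrix.cons_val_one, Matrix.head_cons]; ring) rfl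
/-- For every integer `p ≥ 3`, the map `ρ` restricted to `W_p` is a
Z-homeomorphism of `W_p` onto `L`. -/
theorem stmt12 (p : ℕ) (hp : 3 ≤ p) : IsZHomeoOnto (Wline p) Lset rho11 := by
  refine ⟨rho_zmap _, ?_, ?_, gmap p, g_zmap p _,
    fun w hw => (keyW p hp w hw).2, fun y hy => (keyL p hp y hy).2⟩
  · apply Set.Subset.antisymm
    · rintro _ ⟨w, hw, rfl⟩
      exact (keyW p hp w hw).1
    · intro y hy
      exact ⟨gmap p y, (keyL p hp y hy).1, (keyL p hp y hy).2⟩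
  · intro a ha b hb hab
    have h := (keyW p hp a ha).2
    rw [← h, hab, (keyW p hp b hb).2]
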